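/- If X is a finite graph, then L = π(C₁(X,ℤ)) equals the dual lattice Z₁(X,ℤ)* = {v ∈ Z₁(X,ℝ) : ⟨v,w⟩ ∈ ℤ for all w ∈ Z₁(X,ℤ)}. -/

import Mathlib

/-- A graph in the sense of Sunada's topological crystallography: a set of vertices,
a set of edges, source and target maps, and a fixed-point free involution sending
each edge to its inverse. -/
structure SunadaGraph where
  V : Type
  E : Type
  s : E → V
  t : E → V
  inv : E → E
  s_inv : ∀ e, s (inv e) = t e
  t_inv : ∀ e, t (inv e) = s e
  inv_inv : ∀ e, inv (inv e) = e
  inv_ne : ∀ e, inv e ≠ e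

namespace SunadaGraph

variable (X : SunadaGraph)

/-- `X.IsPath x y γ` : the word of edges `γ` is a path from `x` to `y` in `X`. -/
inductive IsPath : X.V → X.V → List X.E → Prop
  | nil (x : X.V) : IsPath x x []
  | cons (e : X.E) {y : X.V} {γ : List X.E} (h : IsPath (X.t e) y γ) :
      IsPath (X.s e) y (e :: γ)

/-- A graph is connected if any two vertices are joined by a path. -/
def Connected : Prop := ∀ x y : X.V, ∃ γ : List X.E, X.IsPath x y γ

/-- An edge is a bridge if there is no path from its target to its source
avoiding both the edge and its inverse. -/
def IsBridge (e : X.E) : Prop :=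
  ¬ ∃ γ : List X.E, X.IsPath (X.t e) (X.s e) γ ∧ e ∉ γ ∧ X.inv e ∉ γ

/-- The space `C₁(X,ℝ)` of real 1-chains: formal linear combinations of edges
with `e⁻¹ = -e`, realized as finitely supported functions `c : E → ℝ` with
`c(e⁻¹) = - c(e)`. -/
noncomputable def C1 : Submodule ℝ (X.E →₀ ℝ) where
  carrier := {c | ∀ e, c (X.inv e) = - c e}
  add_mem' := by
    intro a b ha hb e
    simp only [Finsupp.add_apply, ha e, hb e]
    ring
  zero_mem' := by intro e; simp
  smul_mem' := by
    intro r c hc e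
    simp only [Finsupp.smul_apply, hc e, smul_eq_mul]
    ring

/-- The 1-chain associated to a single edge. -/
noncomputable def edgeChain (e : X.E) : ↥X.C1 :=
  ⟨Finsupp.single e 1 - Finsupp.single (X.inv e) 1, by
    intro f
    classical
    have h1 : (e = X.inv f) ↔ (X.inv e = f) := by
      constructor
      · rintro rfl; exact X.inv_inv f
      · rintro rfl; exact (X.inv_inv e).symm
    have h2 : (X.inv e = X.inv f) ↔ (e = f) := by
      constructor
      · intro h
        have := congrArg X.inv h
        rwa [X.inv_inv, X.inv_inv] at this
      · rintro rfl; rfl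
    simp only [Finsupp.sub_apply, Finsupp.single_apply, h1, h2]
    ring⟩

/-- The 1-chain `c_γ` of a path `γ`. -/
noncomputable def pathChain (γ : List X.E) : ↥X.C1 := (γ.map X.edgeChain).sum

/-- The inner product on `C₁(X,ℝ)` for which the edges form an orthonormal basis
(with `e⁻¹` counting as the negative of `e`). -/
noncomputable def chainInner (c d : ↥X.C1) : ℝ :=
  (1/2) * ((c : X.E →₀ ℝ).sum fun e x => x * (d : X.E →₀ ℝ) e)

/-- The boundary of a 1-chain. -/
noncomputable def boundary (c : ↥X.C1) : X.V →₀ ℝ :=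
  (c : X.E →₀ ℝ).sum fun e x => x • (Finsupp.single (X.t e) (1:ℝ) - Finsupp.single (X.s e) 1)

/-- A 1-cycle is a 1-chain with vanishing boundary. -/
def IsCycle (c : ↥X.C1) : Prop := X.boundary c = 0

/-- An integral 1-chain: all coefficients are integers. -/
def IsIntegral (c : ↥X.C1) : Prop := ∀ e, ∃ n : ℤ, (c : X.E →₀ ℝ) e = (n : ℝ)

/-- The support of a 1-chain: the set of edges with positive coefficient. -/
def chainSupp (c : ↥X.C1) : Set X.E := {e | 0 < (c : X.E →₀ ℝ) e}

/-- `p` is the orthogonal projection of `C₁(X,ℝ)` onto the space `Z₁(X,ℝ)` of 1-cycles: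
it takes values in `Z₁(X,ℝ)` and `c - p c` is orthogonal to every 1-cycle. -/
def IsOrthoProj (p : ↥X.C1 → ↥X.C1) : Prop :=
  (∀ c, X.IsCycle (p c)) ∧ (∀ c z, X.IsCycle z → X.chainInner (c - p c) z = 0)

/-- Two paths from `x` to `y` are homologous if one can be obtained from the other
by repeatedly inserting or deleting subwords `e e⁻¹`, and/or replacing a subword
`στ` by `τσ` where `σ` and `τ` are loops based at the same vertex. -/
inductive Homologous : X.V → X.V → List X.E → List X.E → Prop
  | refl {x y : X.V} (γ : List X.E) (h : X.IsPath x y γ) : Homologous x y γ γ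
  | cancel {x y : X.V} (γ δ : List X.E) (e : X.E)
      (h : X.IsPath x y (γ ++ e :: X.inv e :: δ)) (h' : X.IsPath x y (γ ++ δ)) :
      Homologous x y (γ ++ e :: X.inv e :: δ) (γ ++ δ)
  | swap {x y : X.V} (γ σ τ δ : List X.E) (v : X.V)
      (hσ : X.IsPath v v σ) (hτ : X.IsPath v v τ)
      (h : X.IsPath x y (γ ++ (σ ++ (τ ++ δ))))
      (h' : X.IsPath x y (γ ++ (τ ++ (σ ++ δ)))) :
      Homologous x y (γ ++ (σ ++ (τ ++ δ))) (γ ++ (τ ++ (σ ++ δ)))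
  | symm {x y : X.V} {a b : List X.E} (h : Homologous x y a b) : Homologous x y b a
  | trans {x y : X.V} {a b c : List X.E} (h1 : Homologous x y a b)
      (h2 : Homologous x y b c) : Homologous x y a c

/-- A simple path: no vertex is visited twice. -/
def IsSimplePath (x y : X.V) (γ : List X.E) : Prop :=
  X.IsPath x y γ ∧ (x :: γ.map X.t).Nodup

/-- A simple loop based at `x`: a loop in which every vertex other than `x` occurs
at most once and `x` occurs only as the initial and final vertex. -/
def IsSimpleLoop (x : X.V) (γ : List X.E) : Prop :=
  X.IsPath x x γ ∧ (x :: (γ.map X.t).dropLast).Nodup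

/-- A reduced word: no subword of the form `e e⁻¹`. -/
def Reduced (γ : List X.E) : Prop := γ.Chain' (fun a b => b ≠ X.inv a)

/-- A spanning tree: a set of edges, closed under inversion, such that the spanning
subgraph it determines is connected and has no nonempty reduced loops. -/
def IsSpanningTree (S : Set X.E) : Prop :=
  (∀ e ∈ S, X.inv e ∈ S) ∧
  (∀ x y : X.V, ∃ γ : List X.E, X.IsPath x y γ ∧ ∀ e ∈ γ, e ∈ S) ∧
  (∀ (x : X.V) (γ : List X.E), X.IsPath x x γ → (∀ e ∈ γ, e ∈ S) → X.Reduced γ → γ = [])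

/-- The quotient of a set of 1-chains by the translation action of the
integral 1-cycles. -/
def transQuot (S : Set ↥X.C1) : Type :=
  Quot (fun a b : S => ∃ z : ↥X.C1, X.IsCycle z ∧ X.IsIntegral z ∧ (b : ↥X.C1) = (a : ↥X.C1) + z)

end SunadaGraph

namespace SunadaGraph
set_option linter.unusedSectionVars false

open Finsupp Finset

variable (X : SunadaGraph) [Fintype X.V] [Fintype X.E]

noncomputable section
open scoped Classical

/-- An orientation: a choice of one edge from each pair `{e, e⁻¹}`. -/
def ornt : Finset X.E :=
  Finset.univ.filter (fun e => (Fintype.equivFin X.E) e < (Fintype.equivFin X.E) (X.inv e))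

lemma mem_ornt_iff (e : X.E) : e ∈ X.ornt ↔ X.inv e ∉ X.ornt := by
  classical
  simp only [ornt, Finset.mem_filter, Finset.mem_univ, true_and, X.inv_inv, not_lt]
  have hne : (Fintype.equivFin X.E) e ≠ (Fintype.equivFin X.E) (X.inv e) := by
    intro h
    exact X.inv_ne e (((Fintype.equivFin X.E).injective h).symm)
  constructor
  · intro h; exact le_of_lt h
  · intro h; exact lt_of_le_of_ne h hne

lemma ornt_or (e : X.E) : e ∈ X.ornt ∨ X.inv e ∈ X.ornt := by
  by_cases h : e ∈ X.ornt
  · exact Or.inl h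
  · right
    by_contra h2
    exact h2 (by rw [X.mem_ornt_iff, X.inv_inv]; exact h)

/-- The inversion as an equivalence. -/
def invEquiv : X.E ≃ X.E := ⟨X.inv, X.inv, X.inv_inv, X.inv_inv⟩

lemma inner_half (c d : ↥X.C1) :
    X.chainInner c d = (1/2) * ∑ e : X.E, c.1 e * d.1 e := by
  unfold SunadaGraph.chainInner
  congr 1
  exact Finsupp.sum_fintype _ _ (fun e => by simp)

lemma inner_sum (c d : ↥X.C1) :
    X.chainInner c d = ∑ e ∈ X.ornt, c.1 e * d.1 e := by
  rw [inner_half]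
  have hsplit := Finset.sum_filter_add_sum_filter_not Finset.univ (fun e => e ∈ X.ornt)
    (fun e => c.1 e * d.1 e)
  have h2 : ∑ e ∈ Finset.univ.filter (fun e => ¬ e ∈ X.ornt), c.1 e * d.1 e
      = ∑ e ∈ Finset.univ.filter (fun e => e ∈ X.ornt), c.1 e * d.1 e := by
    apply Finset.sum_nbij' (fun e => X.inv e) (fun e => X.inv e)
    · intro a ha
      simp only [Finset.mem_filter, Finset.mem_univ, true_and] at ha ⊢
      rcases X.ornt_or a with h | h
      · exact absurd h ha
      · exact h
    · intro a ha
      simp only [Finset.mem_filter, Finset.mem_univ, true_and] at ha ⊢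
      exact (X.mem_ornt_iff a).mp ha
    · intro a _; exact X.inv_inv a
    · intro a _; exact X.inv_inv a
    · intro a _
      rw [c.2 a, d.2 a]; ring
  have hfil : Finset.univ.filter (fun e => e ∈ X.ornt) = X.ornt := by
    ext e; simp
  rw [hfil] at hsplit h2
  rw [← hsplit, h2]; ring

lemma inner_comm (c d : ↥X.C1) : X.chainInner c d = X.chainInner d c := by
  rw [inner_sum, inner_sum]
  exact Finset.sum_congr rfl (fun e _ => mul_comm _ _)

lemma coe_sub_apply (c d : ↥X.C1) (e : X.E) : (c - d).1 e = c.1 e - d.1 e := by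
  simp

lemma coe_add_apply (c d : ↥X.C1) (e : X.E) : (c + d).1 e = c.1 e + d.1 e := by
  simp

lemma inner_sub_left (a b d : ↥X.C1) :
    X.chainInner (a - b) d = X.chainInner a d - X.chainInner b d := by
  simp only [inner_sum, coe_sub_apply, sub_mul, Finset.sum_sub_distrib]

lemma inner_add_right (a b d : ↥X.C1) :
    X.chainInner a (b + d) = X.chainInner a b + X.chainInner a d := by
  simp only [inner_sum, coe_add_apply, mul_add, Finset.sum_add_distrib]

lemma inner_zero_right (a : ↥X.C1) : X.chainInner a 0 = 0 := by
  simp [inner_sum]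

lemma inner_smul_right (a b : ↥X.C1) (r : ℝ) :
    X.chainInner a (r • b) = r * X.chainInner a b := by
  simp only [inner_sum, Finset.mul_sum]
  refine Finset.sum_congr rfl (fun e _ => ?_)
  have : (r • b).1 e = r * b.1 e := by simp
  rw [this]; ring

lemma inner_self_eq_zero {c : ↥X.C1} (h : X.chainInner c c = 0) : c = 0 := by
  rw [inner_sum] at h
  have hz : ∀ e ∈ X.ornt, c.1 e * c.1 e = 0 := by
    intro e he
    have := Finset.sum_eq_zero_iff_of_nonneg (fun e _ => mul_self_nonneg (c.1 e)) |>.mp h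
    exact this e he
  have : ∀ e, c.1 e = 0 := by
    intro e
    rcases X.ornt_or e with h' | h'
    · exact mul_self_eq_zero.mp (hz e h')
    · have := mul_self_eq_zero.mp (hz _ h')
      rw [c.2 e] at this
      linarith
  ext e
  exact this e

lemma boundary_eq (c : ↥X.C1) :
    X.boundary c = ∑ f : X.E,
      (c.1 f) • (Finsupp.single (X.t f) (1:ℝ) - Finsupp.single (X.s f) 1) :=
  Finsupp.sum_fintype _ _ (fun f => by simp)

lemma boundary_sub (a b : ↥X.C1) : X.boundary (a - b) = X.boundary a - X.boundary b := by
  simp only [boundary_eq, coe_sub_apply, sub_smul, Finset.sum_sub_distrib]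

lemma boundary_add (a b : ↥X.C1) : X.boundary (a + b) = X.boundary a + X.boundary b := by
  simp only [boundary_eq, coe_add_apply, add_smul, Finset.sum_add_distrib]

lemma boundary_zero : X.boundary (0 : ↥X.C1) = 0 := by
  simp [boundary_eq]

lemma boundary_smul (r : ℝ) (a : ↥X.C1) : X.boundary (r • a) = r • X.boundary a := by
  simp only [boundary_eq, Finset.smul_sum]
  refine Finset.sum_congr rfl (fun f _ => ?_)
  have : (r • a).1 f = r * a.1 f := by simp
  rw [this, smul_smul]

lemma edgeChain_apply (e f : X.E) :
    (X.edgeChain e).1 f = (if e = f then (1:ℝ) else 0) - (if X.inv e = f then 1 else 0) := by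
  classical
  simp [SunadaGraph.edgeChain, Finsupp.single_apply]

lemma boundary_edgeChain (e : X.E) :
    X.boundary (X.edgeChain e)
      = (2:ℝ) • (Finsupp.single (X.t e) 1 - Finsupp.single (X.s e) 1) := by
  classical
  rw [boundary_eq]
  simp only [edgeChain_apply, sub_smul, ite_smul, one_smul, zero_smul,
    Finset.sum_sub_distrib, Finset.sum_ite_eq, Finset.mem_univ, if_true]
  rw [X.t_inv, X.s_inv]
  module

lemma inner_edgeChain_right (u : ↥X.C1) (e : X.E) :
    X.chainInner u (X.edgeChain e) = u.1 e := by
  classical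
  rw [inner_half]
  simp only [edgeChain_apply, mul_sub, mul_ite, mul_one, mul_zero,
    Finset.sum_sub_distrib, Finset.sum_ite_eq, Finset.mem_univ, if_true]
  rw [u.2 e]
  ring

lemma isIntegral_zero : X.IsIntegral (0 : ↥X.C1) := fun e => ⟨0, by simp⟩

lemma isIntegral_add {a b : ↥X.C1} (ha : X.IsIntegral a) (hb : X.IsIntegral b) :
    X.IsIntegral (a + b) := by
  intro e
  obtain ⟨n, hn⟩ := ha e
  obtain ⟨m, hm⟩ := hb e
  exact ⟨n + m, by rw [coe_add_apply, hn, hm]; push_cast; ring⟩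

lemma isIntegral_zsmul (k : ℤ) {a : ↥X.C1} (ha : X.IsIntegral a) :
    X.IsIntegral ((k:ℝ) • a) := by
  intro e
  obtain ⟨n, hn⟩ := ha e
  refine ⟨k * n, ?_⟩
  have : ((k:ℝ) • a).1 e = (k:ℝ) * a.1 e := by simp
  rw [this, hn]; push_cast; ring

lemma isIntegral_edgeChain (e : X.E) : X.IsIntegral (X.edgeChain e) := by
  classical
  intro f
  refine ⟨(if e = f then 1 else 0) - (if X.inv e = f then 1 else 0), ?_⟩
  rw [edgeChain_apply]
  split_ifs <;> norm_num

lemma isIntegral_sum {ι : Type*} (s : Finset ι) (c : ι → ↥X.C1)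
    (hc : ∀ i ∈ s, X.IsIntegral (c i)) : X.IsIntegral (∑ i ∈ s, c i) := by
  classical
  induction s using Finset.induction_on with
  | empty => simpa using X.isIntegral_zero
  | insert _ _ hnm ih =>
    rename_i a s'
    rw [Finset.sum_insert hnm]
    exact X.isIntegral_add (hc a (Finset.mem_insert_self a s'))
      (ih (fun i hi => hc i (Finset.mem_insert_of_mem hi)))

lemma exists_next {u : ↥X.C1} (hu : X.IsCycle u) {e : X.E} (he : 0 < u.1 e) :
    ∃ f, 0 < u.1 f ∧ X.s f = X.t e := by
  classical
  set y := X.t e with hy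
  have hb : X.boundary u = 0 := hu
  rw [boundary_eq] at hb
  have h0 : ∑ f : X.E,
      u.1 f * ((if X.t f = y then (1:ℝ) else 0) - (if X.s f = y then 1 else 0)) = 0 := by
    have := congrArg (fun g : X.V →₀ ℝ => g y) hb
    simpa [Finset.sum_apply', Finsupp.single_apply] using this
  have hsplit : ∑ f : X.E, (if X.t f = y then u.1 f else 0)
      - ∑ f : X.E, (if X.s f = y then u.1 f else 0) = 0 := by
    have heq : ∑ f : X.E,
        u.1 f * ((if X.t f = y then (1:ℝ) else 0) - (if X.s f = y then 1 else 0))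
        = ∑ f : X.E, (if X.t f = y then u.1 f else 0)
          - ∑ f : X.E, (if X.s f = y then u.1 f else 0) := by
      rw [← Finset.sum_sub_distrib]
      refine Finset.sum_congr rfl (fun f _ => ?_)
      split_ifs <;> ring
    rw [← heq]
    exact h0
  have hrev : ∑ f : X.E, (if X.s f = y then u.1 f else 0)
      = - ∑ f : X.E, (if X.t f = y then u.1 f else 0) := by
    rw [← Finset.sum_neg_distrib]
    refine Fintype.sum_equiv X.invEquiv _ _ (fun f => ?_)
    simp only [invEquiv, Equiv.coe_fn_mk]
    simp only [X.t_inv, u.2 f]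
    split_ifs <;> ring
  have hA : ∑ f : X.E, (if X.t f = y then u.1 f else 0) = 0 := by
    rw [hrev] at hsplit; linarith
  by_contra hno
  push_neg at hno
  have hnonneg : ∀ f ∈ Finset.univ, 0 ≤ (if X.t f = y then u.1 f else 0) := by
    intro f _
    split_ifs with htf
    · by_contra hlt
      push_neg at hlt
      have h1 : 0 < u.1 (X.inv f) := by rw [u.2 f]; linarith
      exact hno (X.inv f) h1 (by rw [X.s_inv, htf])
    · exact le_refl 0
  have hpos : 0 < ∑ f : X.E, (if X.t f = y then u.1 f else 0) := by
    refine Finset.sum_pos' hnonneg ⟨e, Finset.mem_univ e, ?_⟩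
    rw [if_pos hy.symm]
    exact he
  linarith


lemma eq_zero_of_inner_integral_cycles (u : ↥X.C1) (hu : X.IsCycle u)
    (h : ∀ w, X.IsCycle w → X.IsIntegral w → X.chainInner u w = 0) : u = 0 := by
  classical
  by_contra hne
  have hex : ∃ e, 0 < u.1 e := by
    have hex0 : ∃ e, u.1 e ≠ 0 := by
      by_contra hall
      push_neg at hall
      exact hne (by ext e; exact hall e)
    obtain ⟨e, he⟩ := hex0
    rcases lt_or_gt_of_ne he with h1 | h1
    · exact ⟨X.inv e, by rw [u.2 e]; linarith⟩
    · exact ⟨e, h1⟩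
  obtain ⟨e₀, he₀⟩ := hex
  let g : {e : X.E // 0 < u.1 e} → {e : X.E // 0 < u.1 e} := fun p =>
    ⟨(X.exists_next hu p.2).choose, (X.exists_next hu p.2).choose_spec.1⟩
  have hg : ∀ p, X.s (g p).1 = X.t p.1 := fun p => (X.exists_next hu p.2).choose_spec.2
  let seq : ℕ → {e : X.E // 0 < u.1 e} := fun n => g^[n] ⟨e₀, he₀⟩
  have hseq : ∀ n, X.s (seq (n+1)).1 = X.t (seq n).1 := by
    intro n
    have hs : seq (n+1) = g (seq n) := Function.iterate_succ_apply' g n _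
    rw [hs]
    exact hg _
  have key : ∃ i j, i < j ∧ X.t (seq i).1 = X.t (seq j).1 := by
    obtain ⟨i, j, hij, hveq⟩ :=
      Finite.exists_ne_map_eq_of_infinite (fun n : ℕ => X.t (seq n).1)
    rcases hij.lt_or_gt with hlt | hlt
    · exact ⟨i, j, hlt, hveq⟩
    · exact ⟨j, i, hlt, hveq.symm⟩
  obtain ⟨i, j, hij, hveq⟩ := key
  let w : ℕ → ↥X.C1 := fun n => ∑ k ∈ Finset.range n, X.edgeChain (seq (i+1+k)).1
  have hwint : ∀ n, X.IsIntegral (w n) :=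
    fun n => X.isIntegral_sum _ _ (fun k _ => X.isIntegral_edgeChain _)
  have hwb : ∀ n, X.boundary (w n)
      = (2:ℝ) • (Finsupp.single (X.t (seq (i+n)).1) 1 - Finsupp.single (X.t (seq i).1) 1) := by
    intro n
    induction n with
    | zero =>
      have : w 0 = 0 := Finset.sum_range_zero _
      rw [this, boundary_zero]
      simp
    | succ n ih =>
      have hw : w (n+1) = w n + X.edgeChain (seq (i+1+n)).1 := Finset.sum_range_succ _ _
      rw [hw, boundary_add, ih, boundary_edgeChain]
      have hs : X.s (seq (i+1+n)).1 = X.t (seq (i+n)).1 := by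
        have : i+1+n = (i+n)+1 := by omega
        rw [this]
        exact hseq _
      have ht : i+1+n = i+(n+1) := by omega
      rw [hs, ht]
      module
  have hwc : X.IsCycle (w (j - i)) := by
    show X.boundary _ = 0
    rw [hwb]
    have hji : i + (j - i) = j := by omega
    rw [hji, ← hveq]
    simp
  have hwinner : ∀ n, X.chainInner u (w n) = ∑ k ∈ Finset.range n, u.1 (seq (i+1+k)).1 := by
    intro n
    induction n with
    | zero =>
      have : w 0 = 0 := Finset.sum_range_zero _
      rw [this, inner_zero_right, Finset.sum_range_zero]
    | succ n ih =>
      have hw : w (n+1) = w n + X.edgeChain (seq (i+1+n)).1 := Finset.sum_range_succ _ _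
      rw [hw, inner_add_right, ih, inner_edgeChain_right, Finset.sum_range_succ]
  have hpos : 0 < X.chainInner u (w (j - i)) := by
    rw [hwinner]
    refine Finset.sum_pos (fun k _ => (seq (i+1+k)).2) ?_
    rw [Finset.nonempty_range_iff]
    omega
  have := h _ hwc (hwint _)
  linarith


/-- The coordinate embedding of `ℤ^O` into `C₁`. -/
def jmap (g : {e : X.E // e ∈ X.ornt} → ℤ) : ↥X.C1 :=
  ∑ e : {e : X.E // e ∈ X.ornt}, ((g e : ℝ)) • X.edgeChain e.1

lemma jmap_coeff (g : {e : X.E // e ∈ X.ornt} → ℤ) (f : X.E) :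
    (X.jmap g).1 f = ∑ e : {e : X.E // e ∈ X.ornt}, (g e : ℝ) * ((X.edgeChain e.1).1 f) := by
  unfold jmap
  rw [Submodule.coe_sum]
  rw [Finset.sum_apply']
  refine Finset.sum_congr rfl (fun e _ => ?_)
  simp

lemma jmap_coe_mem (g : {e : X.E // e ∈ X.ornt} → ℤ) (e : {e : X.E // e ∈ X.ornt}) :
    (X.jmap g).1 e.1 = g e := by
  classical
  rw [jmap_coeff]
  rw [Finset.sum_eq_single_of_mem e (Finset.mem_univ e)]
  · rw [edgeChain_apply, if_pos rfl, if_neg (X.inv_ne e.1)]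
    ring
  · intro b _ hb
    rw [edgeChain_apply]
    rw [if_neg, if_neg]
    · ring
    · intro hbe
      have h1 : X.inv b.1 ∉ X.ornt := (X.mem_ornt_iff b.1).mp b.2
      rw [hbe] at h1
      exact h1 e.2
    · intro hbe
      exact hb (Subtype.ext hbe)

lemma jmap_coe_notmem (g : {e : X.E // e ∈ X.ornt} → ℤ) (f : X.E) (hf : X.inv f ∈ X.ornt) :
    (X.jmap g).1 f = - g ⟨X.inv f, hf⟩ := by
  classical
  rw [jmap_coeff]
  rw [Finset.sum_eq_single_of_mem ⟨X.inv f, hf⟩ (Finset.mem_univ _)]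
  · rw [edgeChain_apply]
    rw [if_neg, if_pos (X.inv_inv f)]
    · ring
    · intro hbe
      exact (X.mem_ornt_iff f).mp (hbe ▸ hf) hf
  · intro b _ hb
    rw [edgeChain_apply]
    rw [if_neg, if_neg]
    · ring
    · intro hbe
      apply hb
      apply Subtype.ext
      have h3 := congrArg X.inv hbe
      rwa [X.inv_inv] at h3
    · intro hbe
      have h1 : f ∈ X.ornt := hbe ▸ b.2
      exact ((X.mem_ornt_iff f).mp h1) hf

lemma jmap_integral (g : {e : X.E // e ∈ X.ornt} → ℤ) : X.IsIntegral (X.jmap g) :=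
  X.isIntegral_sum _ _ (fun e _ => X.isIntegral_zsmul (g e) (X.isIntegral_edgeChain e.1))

lemma jmap_floor (c : ↥X.C1) (hc : X.IsIntegral c) :
    X.jmap (fun e => ⌊c.1 e.1⌋) = c := by
  classical
  ext f
  rcases X.ornt_or f with hf | hf
  · rw [jmap_coe_mem X _ ⟨f, hf⟩]
    obtain ⟨n, hn⟩ := hc f
    rw [hn, Int.floor_intCast]
  · rw [jmap_coe_notmem X _ f hf]
    obtain ⟨n, hn⟩ := hc (X.inv f)
    have h2 : c.1 (X.inv f) = - c.1 f := c.2 f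
    rw [hn, Int.floor_intCast, ← hn, h2]
    ring

lemma jmap_add (g h : {e : X.E // e ∈ X.ornt} → ℤ) :
    X.jmap (g + h) = X.jmap g + X.jmap h := by
  unfold jmap
  rw [← Finset.sum_add_distrib]
  refine Finset.sum_congr rfl (fun e _ => ?_)
  rw [Pi.add_apply]
  push_cast
  rw [add_smul]

lemma jmap_zsmul (k : ℤ) (g : {e : X.E // e ∈ X.ornt} → ℤ) :
    X.jmap (k • g) = (k:ℝ) • X.jmap g := by
  unfold jmap
  rw [Finset.smul_sum]
  refine Finset.sum_congr rfl (fun e _ => ?_)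
  rw [Pi.smul_apply, smul_eq_mul]
  push_cast
  rw [mul_smul]

lemma inner_jmap (gc gw : {e : X.E // e ∈ X.ornt} → ℤ) :
    X.chainInner (X.jmap gc) (X.jmap gw)
      = ((∑ e : {e : X.E // e ∈ X.ornt}, gc e * gw e : ℤ) : ℝ) := by
  rw [inner_sum, ← Finset.sum_coe_sort X.ornt]
  push_cast
  refine Finset.sum_congr rfl (fun e _ => ?_)
  rw [jmap_coe_mem, jmap_coe_mem]

/-- The preimage of the cycle space in `ℤ^O`. -/
def lat0 : Submodule ℤ ({e : X.E // e ∈ X.ornt} → ℤ) where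
  carrier := {g | X.IsCycle (X.jmap g)}
  add_mem' := by
    intro a b ha hb
    show X.boundary (X.jmap (a + b)) = 0
    rw [jmap_add, boundary_add, ha, hb, add_zero]
  zero_mem' := by
    show X.boundary (X.jmap 0) = 0
    have h0 : X.jmap 0 = 0 := by
      unfold jmap
      refine Finset.sum_eq_zero (fun e _ => ?_)
      simp
    rw [h0, boundary_zero]
  smul_mem' := by
    intro k g hg
    show X.boundary (X.jmap (k • g)) = 0
    rw [jmap_zsmul, boundary_smul, hg, smul_zero]

end
end SunadaGraph
/-- Lemma of Bacher–de la Harpe–Nagnibeda.  For a finite graph `X`,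
the lattice `L = π(C₁(X,ℤ))` equals the dual lattice
`Z₁(X,ℤ)* = {v ∈ Z₁(X,ℝ) : ⟨v,w⟩ ∈ ℤ for all w ∈ Z₁(X,ℤ)}`. -/
theorem lattice_eq_dual_lattice (X : SunadaGraph) [Fintype X.V] [Fintype X.E]
    (π : ↥X.C1 → ↥X.C1) (hπ : X.IsOrthoProj π) :
    {v : ↥X.C1 | ∃ c : ↥X.C1, X.IsIntegral c ∧ v = π c} =
    {v : ↥X.C1 | X.IsCycle v ∧
      ∀ w : ↥X.C1, X.IsCycle w → X.IsIntegral w →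
        ∃ n : ℤ, X.chainInner v w = (n : ℝ)} := by
  classical
  ext v
  simp only [Set.mem_setOf_eq]
  constructor
  · rintro ⟨c, hc, rfl⟩
    refine ⟨hπ.1 c, fun w hwc hwi => ?_⟩
    have h1 : X.chainInner (π c) w = X.chainInner c w := by
      have h2 := hπ.2 c w hwc
      rw [SunadaGraph.inner_sub_left] at h2
      linarith
    rw [h1, SunadaGraph.inner_sum]
    refine ⟨∑ e ∈ X.ornt, ⌊c.1 e⌋ * ⌊w.1 e⌋, ?_⟩
    push_cast
    refine Finset.sum_congr rfl (fun e _ => ?_)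
    obtain ⟨n, hn⟩ := hc e
    obtain ⟨m, hm⟩ := hwi e
    rw [hn, hm, Int.floor_intCast, Int.floor_intCast]
  · rintro ⟨hv, hdual⟩
    -- Notation
    set G := ({e : X.E // e ∈ X.ornt} → ℤ) with hG
    set Λ₀ := X.lat0 with hΛ
    -- the quotient is torsion-free, hence free, hence projective
    haveI : NoZeroSMulDivisors ℤ (G ⧸ Λ₀) := by
      refine ⟨fun {k x} hkx => ?_⟩
      by_cases hk : k = 0
      · exact Or.inl hk
      · right
        obtain ⟨g, rfl⟩ := Submodule.Quotient.mk_surjective Λ₀ x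
        rw [← Submodule.Quotient.mk_smul, Submodule.Quotient.mk_eq_zero] at hkx
        rw [Submodule.Quotient.mk_eq_zero]
        have hcyc : X.IsCycle (X.jmap (k • g)) := hkx
        have hb : X.boundary (X.jmap (k • g)) = 0 := hcyc
        rw [X.jmap_zsmul, X.boundary_smul] at hb
        have hk' : (k : ℝ) ≠ 0 := Int.cast_ne_zero.mpr hk
        have : X.boundary (X.jmap g) = 0 := by
          rcases smul_eq_zero.mp hb with h | h
          · exact absurd h hk'
          · exact h
        exact this
    obtain ⟨sec, hsec⟩ := Module.projective_lifting_property Λ₀.mkQ LinearMap.id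
      (Submodule.Quotient.mk_surjective Λ₀)
    -- the ℤ-valued functional on Λ₀ given by pairing with v
    have hf0 : ∀ g : ↥Λ₀, (((⌊X.chainInner v (X.jmap g.1)⌋ : ℤ)) : ℝ)
        = X.chainInner v (X.jmap g.1) := by
      intro g
      obtain ⟨n, hn⟩ := hdual (X.jmap g.1) g.2 (X.jmap_integral g.1)
      rw [hn, Int.floor_intCast]
    let flin : ↥Λ₀ →ₗ[ℤ] ℤ :=
      { toFun := fun g => ⌊X.chainInner v (X.jmap g.1)⌋
        map_add' := by
          intro p q
          apply Int.cast_injective (α := ℝ)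
          have hpq := hf0 (p + q)
          rw [Submodule.coe_add] at hpq
          push_cast
          rw [hpq, hf0 p, hf0 q, X.jmap_add, SunadaGraph.inner_add_right]
        map_smul' := by
          intro k p
          apply Int.cast_injective (α := ℝ)
          have hkp := hf0 (k • p)
          rw [Submodule.coe_smul] at hkp
          push_cast
          rw [hkp, X.jmap_zsmul, SunadaGraph.inner_smul_right]
          simp only [RingHom.id_apply, smul_eq_mul]
          push_cast
          rw [hf0 p]
          rfl }
    -- the retraction G → Λ₀
    have hrmem : ∀ x : G, x - sec (Λ₀.mkQ x) ∈ Λ₀ := by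
      intro x
      have h2 : Λ₀.mkQ (sec (Λ₀.mkQ x)) = Λ₀.mkQ x := by
        have := congrArg (fun φ => φ (Λ₀.mkQ x)) hsec
        simpa using this
      have h0 : Λ₀.mkQ (x - sec (Λ₀.mkQ x)) = 0 := by
        rw [map_sub, h2, sub_self]
      rw [Submodule.mkQ_apply] at h0
      exact (Submodule.Quotient.mk_eq_zero Λ₀).mp h0
    let rlin : G →ₗ[ℤ] ↥Λ₀ :=
      { toFun := fun x => ⟨x - sec (Λ₀.mkQ x), hrmem x⟩
        map_add' := by
          intro x y
          apply Subtype.ext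
          simp only [Submodule.coe_add, map_add]
          abel
        map_smul' := by
          intro k x
          apply Subtype.ext
          simp only [Submodule.coe_smul, map_smul, RingHom.id_apply]
          rw [smul_sub] }
    let F : G →ₗ[ℤ] ℤ := flin.comp rlin
    have hF : ∀ g : G, g ∈ Λ₀ → (F g : ℝ) = X.chainInner v (X.jmap g) := by
      intro g hg
      have h1 : rlin g = ⟨g, hg⟩ := by
        apply Subtype.ext
        show g - sec (Λ₀.mkQ g) = g
        have : Λ₀.mkQ g = 0 := by
          rw [Submodule.mkQ_apply, Submodule.Quotient.mk_eq_zero]; exact hg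
        rw [this, map_zero, sub_zero]
      show ((flin (rlin g) : ℤ) : ℝ) = _
      rw [h1]
      exact hf0 ⟨g, hg⟩
    -- the integral chain c
    set cvec : G := (fun e => F (fun j => if e = j then 1 else 0)) with hcvec
    set c : ↥X.C1 := X.jmap cvec with hcdef
    have hcint : X.IsIntegral c := X.jmap_integral cvec
    -- pairing with integral cycles
    have hpair : ∀ w : ↥X.C1, X.IsCycle w → X.IsIntegral w →
        X.chainInner c w = X.chainInner v w := by
      intro w hwc hwi
      set gw : G := (fun e => ⌊w.1 e.1⌋) with hgw
      have hjw : X.jmap gw = w := X.jmap_floor w hwi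
      have hgwmem : gw ∈ Λ₀ := by
        show X.IsCycle (X.jmap gw)
        rw [hjw]; exact hwc
      have h1 : X.chainInner c w = ((∑ e : {e : X.E // e ∈ X.ornt}, cvec e * gw e : ℤ) : ℝ) := by
        rw [hcdef, ← hjw, X.inner_jmap]
      have h2 : F gw = ∑ e : {e : X.E // e ∈ X.ornt}, cvec e * gw e := by
        rw [LinearMap.pi_apply_eq_sum_univ F gw]
        refine Finset.sum_congr rfl (fun e _ => ?_)
        rw [smul_eq_mul, mul_comm]
      rw [h1, ← h2, hF gw hgwmem, hjw]
    -- conclude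
    refine ⟨c, hcint, ?_⟩
    have hu : π c - v = 0 := by
      apply X.eq_zero_of_inner_integral_cycles
      · show X.boundary _ = 0
        rw [X.boundary_sub, hπ.1 c, hv, sub_self]
      · intro w hwc hwi
        rw [SunadaGraph.inner_sub_left]
        have h3 := hπ.2 c w hwc
        rw [SunadaGraph.inner_sub_left] at h3
        have h4 := hpair w hwc hwi
        linarith
    symm
    rw [← sub_eq_zero]
    exact hu
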